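/- Let G be a finite graph with a regular rooted tree decomposition (T,bag), let s,t ∈ V(G) and S ⊆ V(G), and set Ŝ = S ∪ {s,t}. Let z be a strict ancestor of y in T and assume Ŝ ∩ (comp(z) \ cone(y)) = ∅. Let J be the graph with vertex set D(y) ∪ adh(z) whose edge set is the union of profile(y) and the edge set of torso(z,y). Then for every pair of distinct vertices a,b ∈ V(J): there is an a–b path in G[cone(z)] that avoids all vertices of S if and only if there is an a–b path in J that avoids all vertices of S. -/

import Mathlib

/-- A finite rooted tree, encoded by its parent function. -/
structure RTree (ι : Type*) where
  root : ι
  parent : ι → ι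
  parent_root : parent root = root
  reaches_root : ∀ x : ι, ∃ n : ℕ, parent^[n] x = root

namespace RTree

variable {ι : Type*} (T : RTree ι)

/-- `T.Anc x y` means `x` is an ancestor of `y` (every node is its own ancestor). -/
def Anc (x y : ι) : Prop := ∃ n : ℕ, T.parent^[n] y = x

/-- `T.IsChild y x` means `y` is a child of `x`. -/
def IsChild (y x : ι) : Prop := y ≠ T.root ∧ T.parent y = x

/-- The underlying undirected graph of the rooted tree. -/
def treeGraph : SimpleGraph ι where
  Adj x y := x ≠ y ∧ (T.IsChild x y ∨ T.IsChild y x)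
  symm := ⟨fun x y h => ⟨h.1.symm, h.2.symm⟩⟩
  loopless := ⟨fun x h => h.1 rfl⟩

end RTree

/-- Two vertices are connected by a walk all of whose vertices lie in `U`. -/
def ConnIn {V : Type*} (G : SimpleGraph V) (U : Set V) (a b : V) : Prop :=
  ∃ p : G.Walk a b, ∀ w ∈ p.support, w ∈ U

theorem ConnIn.symm {V : Type*} {G : SimpleGraph V} {U : Set V} {a b : V}
    (h : ConnIn G U a b) : ConnIn G U b a := by
  obtain ⟨p, hp⟩ := h
  refine ⟨p.reverse, fun w hw => hp w ?_⟩
  rwa [SimpleGraph.Walk.support_reverse, List.mem_reverse] at hw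

/-- `X` is `(q,k)`-unbreakable in the induced subgraph `G[U]`: for every separation `(A,B)`
of `G[U]` of order at most `k`, one of the two sides contains at most `q` vertices of `X`. -/
def UnbreakableIn {V : Type*} (G : SimpleGraph V) (U X : Set V) (q k : ℕ) : Prop :=
  ∀ A B : Set V, A ⊆ U → B ⊆ U → A ∪ B = U →
    (∀ a ∈ A \ B, ∀ b ∈ B \ A, ¬ G.Adj a b) →
    (A ∩ B).ncard ≤ k →
    (A ∩ X).ncard ≤ q ∨ (B ∩ X).ncard ≤ q

/-- A rooted tree decomposition of the graph `G`, with nodes indexed by `ι`. -/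
structure TreeDecomp {V : Type*} (G : SimpleGraph V) (ι : Type*) extends RTree ι where
  bag : ι → Set V
  /-- (T1) for every vertex, the set of nodes whose bag contains it
  is a nonempty subtree of the tree. -/
  bag_subtree : ∀ u : V, ((toRTree.treeGraph).induce {x : ι | u ∈ bag x}).Connected
  /-- (T2) every edge is contained in some bag. -/
  bag_edge : ∀ u v : V, G.Adj u v → ∃ x : ι, u ∈ bag x ∧ v ∈ bag x

namespace TreeDecomp

variable {V ι : Type*} {G : SimpleGraph V} (D : TreeDecomp G ι)

/-- The adhesion of a node: intersection of its bag with the bag of its parent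
(empty at the root). -/
def adh (x : ι) : Set V :=
  {v : V | x ≠ D.root ∧ v ∈ D.bag (D.parent x) ∧ v ∈ D.bag x}

/-- The margin of a node. -/
def mrg (x : ι) : Set V := D.bag x \ D.adh x

/-- The cone at a node: union of the bags at all its descendants. -/
def cone (x : ι) : Set V := {v : V | ∃ y : ι, D.toRTree.Anc x y ∧ v ∈ D.bag y}

/-- The component at a node. -/
def comp (x : ι) : Set V := D.cone x \ D.adh x

/-- A tree decomposition is regular if every non-root node has nonempty margin,
connected component, and every adhesion vertex has a neighbour in the component. -/
def Regular : Prop :=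
  ∀ x : ι, x ≠ D.root →
    (D.mrg x).Nonempty ∧
    (G.induce (D.comp x)).Connected ∧
    ∀ u ∈ D.adh x, ∃ w ∈ D.comp x, G.Adj u w

end TreeDecomp

/-- Adjacency in the torso of `X` in the induced subgraph `G[U]`:
`a, b ∈ X` are adjacent iff `G[U]` contains an `a`–`b` path whose internal vertices
all avoid `X`. -/
def TorsoAdj {V : Type*} (G : SimpleGraph V) (U X : Set V) (a b : V) : Prop :=
  a ≠ b ∧ a ∈ X ∧ b ∈ X ∧
    ∃ p : G.Walk a b, (∀ w ∈ p.support, w ∈ U) ∧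
      (∀ w ∈ p.support, w ≠ a → w ≠ b → w ∉ X)

namespace TreeDecomp

variable {V ι : Type*} {G : SimpleGraph V} (D : TreeDecomp G ι)

/-- `D(x) = adh(x) ∪ ({s,t} ∩ cone(x))`. -/
def Dset (s t : V) (x : ι) : Set V := D.adh x ∪ ({s, t} ∩ D.cone x)

end TreeDecomp

section AuxTree

namespace RTree

variable {ι : Type*} (T : RTree ι)

lemma anc_refl (x : ι) : T.Anc x x := ⟨0, rfl⟩

lemma anc_trans {x y z : ι} (h1 : T.Anc x y) (h2 : T.Anc y z) : T.Anc x z := by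
  obtain ⟨n, hn⟩ := h1
  obtain ⟨m, hm⟩ := h2
  exact ⟨n + m, by rw [Function.iterate_add_apply, hm, hn]⟩

lemma iterate_parent_root (n : ℕ) : T.parent^[n] T.root = T.root :=
  Function.iterate_fixed T.parent_root n

lemma anc_antisymm {x y : ι} (h1 : T.Anc x y) (h2 : T.Anc y x) : x = y := by
  obtain ⟨n, hn⟩ := h1
  obtain ⟨m, hm⟩ := h2
  rcases Nat.eq_zero_or_pos n with h | h
  · subst h; exact hn.symm
  · have hcyc : T.parent^[m + n] y = y := by
      rw [Function.iterate_add_apply, hn, hm]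
    obtain ⟨N, hN⟩ := T.reaches_root y
    have hmul : ∀ j : ℕ, T.parent^[j * (m + n)] y = y := by
      intro j
      induction j with
      | zero => simp
      | succ j ih => rw [Nat.succ_mul, Function.iterate_add_apply, hcyc, ih]
    have hroot : y = T.root := by
      calc y = T.parent^[N * (m + n)] y := (hmul N).symm
        _ = T.parent^[N * (m + n) - N] (T.parent^[N] y) := by
            rw [← Function.iterate_add_apply]
            congr 1
            have : N ≤ N * (m + n) := Nat.le_mul_of_pos_right _ (by omega)
            omega
        _ = T.root := by rw [hN, T.iterate_parent_root]
    rw [hroot] at hn ⊢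
    rw [T.iterate_parent_root] at hn
    exact hn.symm

/-- Crossing a tree edge from a descendant of `y` to a non-descendant of `y`
means crossing the edge between `y` and its parent. -/
lemma cross {y c e : ι} (h : T.treeGraph.Adj c e) (hc : T.Anc y c) (he : ¬ T.Anc y e) :
    c = y ∧ e = T.parent y ∧ y ≠ T.root := by
  obtain ⟨hne, hor⟩ := h
  obtain ⟨n, hn⟩ := hc
  rcases hor with h1 | h1
  · -- IsChild c e : c ≠ root ∧ parent c = e
    cases n with
    | zero =>
      simp only [Function.iterate_zero, id] at hn
      subst hn
      exact ⟨rfl, h1.2.symm, h1.1⟩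
    | succ n =>
      exfalso
      refine he ⟨n, ?_⟩
      rw [← h1.2, ← Function.iterate_succ_apply]
      exact hn
  · -- IsChild e c : e ≠ root ∧ parent e = c
    exfalso
    refine he ⟨n + 1, ?_⟩
    rw [Function.iterate_succ_apply, h1.2]
    exact hn

end RTree

namespace TreeDecomp

variable {V ι : Type*} {G : SimpleGraph V} (D : TreeDecomp G ι)

lemma adh_subset_bag (x : ι) : D.adh x ⊆ D.bag x := fun _ hv => hv.2.2

lemma bag_subset_cone (x : ι) : D.bag x ⊆ D.cone x :=
  fun v hv => ⟨x, D.toRTree.anc_refl x, hv⟩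

lemma cone_mono {x y : ι} (h : D.toRTree.Anc x y) : D.cone y ⊆ D.cone x :=
  fun v ⟨w, hw, hv⟩ => ⟨w, D.toRTree.anc_trans h hw, hv⟩

/-- Core consequence of (T1): a vertex lying both in the cone of `y` and in the bag
of a non-descendant of `y` lies in the adhesion of `y`. -/
lemma mem_adh_of_cone_of_bag {v : V} {y x : ι} (hv : v ∈ D.cone y) (hx : v ∈ D.bag x)
    (hnx : ¬ D.toRTree.Anc y x) : v ∈ D.adh y := by
  obtain ⟨x', hx'anc, hx'⟩ := hv
  have hconn := D.bag_subtree v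
  set s : Set ι := {n | v ∈ D.bag n} with hs
  have hr : ((D.toRTree.treeGraph).induce s).Reachable ⟨x', hx'⟩ ⟨x, hx⟩ :=
    hconn.preconnected ⟨x', hx'⟩ ⟨x, hx⟩
  suffices h : ∀ (c d : ↥s) (_ : ((D.toRTree.treeGraph).induce s).Walk c d),
      D.toRTree.Anc y ↑c → ¬ D.toRTree.Anc y ↑d → v ∈ D.adh y by
    exact hr.elim fun W => h _ _ W hx'anc hnx
  intro c d W
  induction W with
  | nil => intro h1 h2; exact absurd h1 h2
  | @cons c e d hadj W ih =>
    intro h1 h2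
    by_cases he : D.toRTree.Anc y ↑e
    · exact ih he h2
    · have hadj' : D.toRTree.treeGraph.Adj ↑c ↑e := hadj
      obtain ⟨hc1, hc2, hc3⟩ := D.toRTree.cross hadj' h1 he
      refine ⟨hc3, ?_, ?_⟩
      · rw [← hc2]; exact e.2
      · rw [← hc1]; exact c.2

/-- Separator property: any neighbour of a vertex of `comp y` lies in `cone y`. -/
lemma sep {y : ι} {w w' : V} (hw : w ∈ D.comp y) (h : G.Adj w w') : w' ∈ D.cone y := by
  obtain ⟨x, hwx, hw'x⟩ := D.bag_edge w w' h
  by_cases hx : D.toRTree.Anc y x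
  · exact ⟨x, hx, hw'x⟩
  · exact absurd (D.mem_adh_of_cone_of_bag hw.1 hwx hx) hw.2

/-- If a path starts in `comp y` and its adhesion vertices can only be its last vertex,
then the whole path stays in `cone y`. -/
lemma walkA {y : ι} : ∀ {c d : V} (r : G.Walk c d), r.IsPath → c ∈ D.comp y →
    (∀ x ∈ r.support, x ∈ D.adh y → x = d) →
    ∀ w ∈ r.support, w ∈ D.cone y := by
  intro c d r
  induction r with
  | nil =>
    intro _ hc _ w hw
    rw [SimpleGraph.Walk.support_nil, List.mem_singleton] at hw
    subst hw; exact hc.1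
  | @cons c e d h r ih =>
    intro hp hc hadh w hw
    rw [SimpleGraph.Walk.support_cons, List.mem_cons] at hw
    rcases hw with rfl | hw
    · exact hc.1
    · have he : e ∈ D.cone y := D.sep hc h
      by_cases hec : e ∈ D.comp y
      · refine ih hp.of_cons hec (fun x hx hx' => hadh x ?_ hx') w hw
        rw [SimpleGraph.Walk.support_cons]
        exact List.mem_cons_of_mem _ hx
      · have headh : e ∈ D.adh y := by
          by_contra hna
          exact hec ⟨he, hna⟩
        have hed : e = d := by
          refine hadh e ?_ headh
          rw [SimpleGraph.Walk.support_cons]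
          exact List.mem_cons_of_mem _ r.start_mem_support
        subst hed
        have hrnil : r = SimpleGraph.Walk.nil :=
          (SimpleGraph.Walk.isPath_iff_eq_nil (p := r)).mp hp.of_cons
        subst hrnil
        rw [SimpleGraph.Walk.support_nil, List.mem_singleton] at hw
        subst hw
        exact he

end TreeDecomp

end AuxTree

/-- Let `z` be a strict ancestor of `y` such that
`Ŝ = S ∪ {s,t}` avoids `comp(z) \ cone(y)`, and let `J` be the graph on
`D(y) ∪ adh(z)` whose edges are the pairs of `profile(y)` together with the edges of
`torso(z,y)`. Then distinct `a, b ∈ D(y) ∪ adh(z)` are joined by an `S`-avoiding path in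
`G[cone(z)]` iff they are joined by an `S`-avoiding path in `J`. -/
theorem stmt7 {V ι : Type*} [Fintype V] [Fintype ι] {G : SimpleGraph V}
    (D : TreeDecomp G ι) (hreg : D.Regular)
    (s t : V) (S : Set V)
    (z y : ι) (hanc : D.toRTree.Anc z y) (hzy : z ≠ y)
    (hdisj : Disjoint (S ∪ {s, t}) (D.comp z \ D.cone y))
    (J : SimpleGraph V)
    (hJ : ∀ a b : V, J.Adj a b ↔ a ≠ b ∧
        ((a ∈ D.Dset s t y ∧ b ∈ D.Dset s t y ∧ ConnIn G (D.cone y \ S) a b) ∨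
          TorsoAdj G (D.cone z \ D.comp y) (D.adh z ∪ D.adh y) a b))
    (a b : V) (ha : a ∈ D.Dset s t y ∪ D.adh z) (hb : b ∈ D.Dset s t y ∪ D.adh z)
    (hab : a ≠ b) :
    ConnIn G (D.cone z \ S) a b ↔ ConnIn J Sᶜ a b := by
  classical
  set X : Set V := D.Dset s t y ∪ D.adh z with hXdef
  have hnancy : ¬ D.toRTree.Anc y z := fun h => hzy (D.toRTree.anc_antisymm hanc h)
  have hconeyz : D.cone y ⊆ D.cone z := D.cone_mono hanc
  have hadhycone : D.adh y ⊆ D.cone y :=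
    fun v hv => D.bag_subset_cone y (D.adh_subset_bag y hv)
  have hadhzcone : D.adh z ⊆ D.cone z :=
    fun v hv => D.bag_subset_cone z (D.adh_subset_bag z hv)
  have hDsub : D.Dset s t y ⊆ D.cone y := by
    rintro v (hv | hv)
    · exact hadhycone hv
    · exact hv.2
  have hXcz : X ⊆ D.cone z := by
    rintro v (hv | hv)
    · exact hconeyz (hDsub hv)
    · exact hadhzcone hv
  have hJX : D.adh z ∪ D.adh y ⊆ X := by
    rintro v (hv | hv)
    · exact Or.inr hv
    · exact Or.inl (Or.inl hv)
  have hJcz : D.adh z ∪ D.adh y ⊆ D.cone z := by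
    rintro v (hv | hv)
    · exact hadhzcone hv
    · exact hconeyz (hadhycone hv)
  -- a vertex of X lying in cone y lies in D(y)
  have hXcone : ∀ x ∈ X, x ∈ D.cone y → x ∈ D.Dset s t y := by
    rintro x (hx | hx) hc
    · exact hx
    · exact Or.inl (D.mem_adh_of_cone_of_bag hc (D.adh_subset_bag z hx) hnancy)
  -- a vertex of X outside comp y lies in adh z ∪ adh y
  have hXnc : ∀ x ∈ X, x ∉ D.comp y → x ∈ D.adh z ∪ D.adh y := by
    rintro x (hx | hx) hnc
    · rcases hx with hx | hx
      · exact Or.inr hx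
      · by_contra _
        exact hnc ⟨hx.2, fun had => ‹x ∉ D.adh z ∪ D.adh y› (Or.inr had)⟩
    · exact Or.inl hx
  -- the segment lemma
  have hseg : ∀ u v : V, u ∈ X → v ∈ X → u ≠ v → ∀ q : G.Walk u v,
      (∀ w ∈ q.support, w ∈ D.cone z \ S) →
      (∀ w ∈ q.support, w ≠ u → w ≠ v → w ∉ X) → J.Adj u v := by
    intro u v hu hv huv q hqS hqX
    set p := q.bypass with hpdef
    have hpath : p.IsPath := q.bypass_isPath
    have hsub : p.support ⊆ q.support := q.support_bypass_subset
    have hpS : ∀ w ∈ p.support, w ∈ D.cone z \ S := fun w hw => hqS w (hsub hw)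
    have hpX : ∀ w ∈ p.support, w ≠ u → w ≠ v → w ∉ X := fun w hw => hqX w (hsub hw)
    by_cases hcase : ∃ w1 ∈ p.support, w1 ∈ D.comp y
    · -- profile edge
      obtain ⟨w1, hw1s, hw1c⟩ := hcase
      have hnodup : p.support.Nodup := hpath.support_nodup
      have hsupp : p.support =
          (p.takeUntil w1 hw1s).support ++ (p.dropUntil w1 hw1s).support.tail := by
        conv_lhs => rw [← p.take_spec hw1s]
        rw [SimpleGraph.Walk.support_append]
      have hdisj' : List.Disjoint (p.takeUntil w1 hw1s).support
          (p.dropUntil w1 hw1s).support.tail := by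
        rw [hsupp] at hnodup
        exact List.disjoint_of_nodup_append hnodup
      -- adh y vertices on the second part must equal v
      have hkey2 : ∀ x ∈ (p.dropUntil w1 hw1s).support, x ∈ D.adh y → x = v := by
        intro x hx hxadh
        by_contra hxv
        have hxu : x = u := by
          by_contra hxu
          exact hpX x (p.support_dropUntil_subset hw1s hx) hxu hxv (hJX (Or.inr hxadh))
        subst hxu
        have hxw1 : x ≠ w1 := fun h => hw1c.2 (h ▸ hxadh)
        have hx' : x ∈ (p.dropUntil w1 hw1s).support.tail := by
          have := (p.dropUntil w1 hw1s).support_eq_cons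
          rw [this, List.mem_cons] at hx
          exact hx.resolve_left hxw1
        exact hdisj' (p.takeUntil w1 hw1s).start_mem_support hx'
      -- adh y vertices on the first part must equal u
      have hkey1 : ∀ x ∈ (p.takeUntil w1 hw1s).support, x ∈ D.adh y → x = u := by
        intro x hx hxadh
        by_contra hxu
        have hxv : x = v := by
          by_contra hxv
          exact hpX x (p.support_takeUntil_subset hw1s hx) hxu hxv (hJX (Or.inr hxadh))
        subst hxv
        have hxw1 : x ≠ w1 := fun h => hw1c.2 (h ▸ hxadh)
        have hx' : x ∈ (p.dropUntil w1 hw1s).support.tail := by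
          have h2 := (p.dropUntil w1 hw1s).support_eq_cons
          have hxend : x ∈ (p.dropUntil w1 hw1s).support :=
            (p.dropUntil w1 hw1s).end_mem_support
          rw [h2, List.mem_cons] at hxend
          exact hxend.resolve_left hxw1
        exact hdisj' hx hx'
      have hc2 : ∀ w ∈ (p.dropUntil w1 hw1s).support, w ∈ D.cone y :=
        D.walkA _ (hpath.dropUntil _) hw1c hkey2
      have hc1 : ∀ w ∈ (p.takeUntil w1 hw1s).support, w ∈ D.cone y := by
        have hrev := D.walkA (p.takeUntil w1 hw1s).reverse (hpath.takeUntil _).reverse hw1c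
          (by
            intro x hx hxadh
            rw [SimpleGraph.Walk.support_reverse, List.mem_reverse] at hx
            exact hkey1 x hx hxadh)
        intro w hw
        exact hrev w (by rw [SimpleGraph.Walk.support_reverse, List.mem_reverse]; exact hw)
      have hallcone : ∀ w ∈ p.support, w ∈ D.cone y := by
        intro w hw
        rw [hsupp, List.mem_append] at hw
        rcases hw with hw | hw
        · exact hc1 w hw
        · exact hc2 w (List.mem_of_mem_tail hw)
      refine (hJ u v).mpr ⟨huv, Or.inl ⟨hXcone u hu (hallcone u p.start_mem_support),
        hXcone v hv (hallcone v p.end_mem_support), p, fun w hw => ⟨hallcone w hw, (hpS w hw).2⟩⟩⟩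
    · -- torso edge
      push_neg at hcase
      refine (hJ u v).mpr ⟨huv, Or.inr ⟨huv,
        hXnc u hu (hcase u p.start_mem_support),
        hXnc v hv (hcase v p.end_mem_support), p,
        fun w hw => ⟨(hpS w hw).1, hcase w hw⟩,
        fun w hw hwu hwv hm => hpX w hw hwu hwv (hJX hm)⟩⟩
  constructor
  · -- forward direction
    rintro ⟨p0, hp0⟩
    have hM : ∀ (c b' : V) (p : G.Walk c b'), (∀ w ∈ p.support, w ∈ D.cone z \ S) → b' ∈ X →
        ∀ u, u ∈ X → ∀ q : G.Walk u c, (∀ w ∈ q.support, w ∈ D.cone z \ S) →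
          (∀ w ∈ q.support, w ≠ u → w ≠ c → w ∉ X) → ConnIn J Sᶜ u b' := by
      intro c b' p
      induction p with
      | @nil c =>
        intro _ hbX u huX q hqS hqX
        by_cases huc : u = c
        · subst huc
          exact ⟨SimpleGraph.Walk.nil, by
            intro w hw
            rw [SimpleGraph.Walk.support_nil, List.mem_singleton] at hw
            subst hw
            exact (hqS _ q.start_mem_support).2⟩
        · have hadj : J.Adj u c := hseg u c huX hbX huc q hqS hqX
          refine ⟨SimpleGraph.Walk.cons hadj SimpleGraph.Walk.nil, ?_⟩
          intro w hw
          rw [SimpleGraph.Walk.support_cons, SimpleGraph.Walk.support_nil, List.mem_cons] at hw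
          rcases hw with rfl | hw
          · exact (hqS w q.start_mem_support).2
          · rw [List.mem_singleton] at hw
            subst hw
            exact (hqS w q.end_mem_support).2
      | @cons c e b' h p ih =>
        intro hpS hbX u huX q hqS hqX
        have hcS : c ∈ D.cone z \ S :=
          hpS c (SimpleGraph.Walk.start_mem_support _)
        have heS : e ∈ D.cone z \ S := by
          refine hpS e ?_
          rw [SimpleGraph.Walk.support_cons]
          exact List.mem_cons_of_mem _ p.start_mem_support
        have hpS' : ∀ w ∈ p.support, w ∈ D.cone z \ S := by
          intro w hw
          refine hpS w ?_
          rw [SimpleGraph.Walk.support_cons]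
          exact List.mem_cons_of_mem _ hw
        by_cases hcX : c ∈ X
        · have step : ConnIn J Sᶜ c b' := by
            refine ih hpS' hbX c hcX (SimpleGraph.Walk.cons h SimpleGraph.Walk.nil) ?_ ?_
            · intro w hw
              rw [SimpleGraph.Walk.support_cons, SimpleGraph.Walk.support_nil, List.mem_cons] at hw
              rcases hw with rfl | hw
              · exact hcS
              · rw [List.mem_singleton] at hw; subst hw; exact heS
            · intro w hw hwc hwe
              rw [SimpleGraph.Walk.support_cons, SimpleGraph.Walk.support_nil, List.mem_cons] at hw
              rcases hw with rfl | hw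
              · exact absurd rfl hwc
              · rw [List.mem_singleton] at hw; exact absurd hw hwe
          by_cases huc : u = c
          · subst huc; exact step
          · have hadj : J.Adj u c := hseg u c huX hcX huc q hqS hqX
            obtain ⟨W, hW⟩ := step
            refine ⟨SimpleGraph.Walk.cons hadj W, ?_⟩
            intro w hw
            rw [SimpleGraph.Walk.support_cons, List.mem_cons] at hw
            rcases hw with rfl | hw
            · exact (hqS w q.start_mem_support).2
            · exact hW w hw
        · refine ih hpS' hbX u huX (q.concat h) ?_ ?_
          · intro w hw
            rw [SimpleGraph.Walk.support_concat,
              List.mem_append, List.mem_singleton] at hw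
            rcases hw with hw | rfl
            · exact hqS w hw
            · exact heS
          · intro w hw hwu hwe
            rw [SimpleGraph.Walk.support_concat,
              List.mem_append, List.mem_singleton] at hw
            rcases hw with hw | rfl
            · by_cases hwc : w = c
              · subst hwc; exact hcX
              · exact hqX w hw hwu hwc
            · exact absurd rfl hwe
    refine hM a b p0 hp0 hb a ha SimpleGraph.Walk.nil ?_ ?_
    · intro w hw
      rw [SimpleGraph.Walk.support_nil, List.mem_singleton] at hw
      rw [hw]
      exact hp0 _ p0.start_mem_support
    · intro w hw hwu _
      rw [SimpleGraph.Walk.support_nil, List.mem_singleton] at hw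
      exact absurd hw hwu
  · -- backward direction
    rintro ⟨W0, hW0⟩
    have hN : ∀ (c d : V) (W : J.Walk c d), (∀ w ∈ W.support, w ∉ S) → c ∈ D.cone z →
        ConnIn G (D.cone z \ S) c d := by
      intro c d W
      induction W with
      | @nil c =>
        intro hS hc
        exact ⟨SimpleGraph.Walk.nil, by
          intro w hw
          rw [SimpleGraph.Walk.support_nil, List.mem_singleton] at hw
          subst hw
          exact ⟨hc, hS w (SimpleGraph.Walk.start_mem_support _)⟩⟩
      | @cons c e d h W ih =>
        intro hS hc
        have hcS : c ∉ S := hS c (SimpleGraph.Walk.start_mem_support _)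
        have heS : e ∉ S := by
          refine hS e ?_
          rw [SimpleGraph.Walk.support_cons]
          exact List.mem_cons_of_mem _ W.start_mem_support
        obtain ⟨hne, hcase⟩ := (hJ c e).mp h
        have step : ConnIn G (D.cone z \ S) c e ∧ e ∈ D.cone z := by
          rcases hcase with ⟨hcD, heD, ⟨q, hq⟩⟩ | ⟨_, hcT, heT, q, hqU, hqI⟩
          · exact ⟨⟨q, fun w hw => ⟨hconeyz (hq w hw).1, (hq w hw).2⟩⟩,
              hconeyz (hDsub heD)⟩
          · refine ⟨⟨q, fun w hw => ⟨(hqU w hw).1, ?_⟩⟩, hJcz heT⟩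
            by_cases hwc : w = c
            · subst hwc; exact hcS
            by_cases hwe : w = e
            · subst hwe; exact heS
            have hwI := hqI w hw hwc hwe
            have hwmem : w ∈ D.comp z \ D.cone y := by
              refine ⟨⟨(hqU w hw).1, fun had => hwI (Or.inl had)⟩, ?_⟩
              intro hwy
              by_cases hwadh : w ∈ D.adh y
              · exact hwI (Or.inr hwadh)
              · exact (hqU w hw).2 ⟨hwy, hwadh⟩
            intro hwS
            exact Set.disjoint_left.mp hdisj (Set.mem_union_left _ hwS) hwmem
        obtain ⟨⟨q, hq⟩, he⟩ := step
        have hS' : ∀ w ∈ W.support, w ∉ S := by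
          intro w hw
          refine hS w ?_
          rw [SimpleGraph.Walk.support_cons]
          exact List.mem_cons_of_mem _ hw
        obtain ⟨q', hq'⟩ := ih hS' he
        refine ⟨q.append q', ?_⟩
        intro w hw
        rw [SimpleGraph.Walk.support_append, List.mem_append] at hw
        rcases hw with hw | hw
        · exact hq w hw
        · exact hq' w (List.mem_of_mem_tail hw)
    exact hN a b W0 (fun w hw => hW0 w hw) (hXcz ha)
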